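/- In the group G₁, for all elements x, y ∈ G₁ and every integer m with |m| ≥ 2, if y · x · y⁻¹ = x^m then x is of finite order (and hence, G₁ being torsion-free, x = 1). Consequently G₁ contains no soluble Baumslag–Solitar subgroup BS(1, m). -/

import Mathlib

def θ₀ : (ℤ × ℤ) →+ (ℤ × ℤ) where
  toFun p := (5 * p.1 + 2 * p.2, -p.1)
  map_zero' := by simp
  map_add' p q := by
    simp only [Prod.fst_add, Prod.snd_add, Prod.mk_add_mk, Prod.mk.injEq]
    constructor <;> ring

/-- The multiplicative version of `θ₀`. -/
def Θ₁ : Multiplicative (ℤ × ℤ) →* Multiplicative (ℤ × ℤ) :=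
  AddMonoidHom.toMultiplicative θ₀

theorem Θ₁_injective : Function.Injective Θ₁ := by
  intro p q h
  have h' : θ₀ p.toAdd = θ₀ q.toAdd := h
  have : p.toAdd = q.toAdd := by
    have h1 := congrArg Prod.fst h'
    have h2 := congrArg Prod.snd h'
    simp only [θ₀, AddMonoidHom.coe_mk, ZeroHom.coe_mk] at h1 h2
    ext <;> omega
  exact this

/-- The isomorphism from the base group onto the range of `Θ₁`. -/
noncomputable def φ₁ : (⊤ : Subgroup (Multiplicative (ℤ × ℤ))) ≃* Θ₁.range :=
  Subgroup.topEquiv.trans (MonoidHom.ofInjective Θ₁_injective)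

/-- The ascending HNN extension of `ℤ × ℤ` along `θ₀`. -/
abbrev G₁ := HNNExtension (Multiplicative (ℤ × ℤ)) ⊤ Θ₁.range φ₁


open HNNExtension SemidirectProduct Multiplicative

/-- The automorphism of `ℚ × ℚ` given by the matrix `[[5,2],[-1,0]]`. -/
def Aq : (ℚ × ℚ) ≃+ (ℚ × ℚ) where
  toFun p := (5 * p.1 + 2 * p.2, -p.1)
  invFun p := (-p.2, (p.1 + 5 * p.2) / 2)
  left_inv p := by ext <;> simp <;> ring
  right_inv p := by ext <;> simp <;> ring
  map_add' p q := by ext <;> simp <;> ring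

instance grpAA : Group (AddAut (ℚ × ℚ)) where
  mul g h := AddEquiv.trans h g
  one := AddEquiv.refl _
  inv := AddEquiv.symm
  mul_assoc _ _ _ := rfl
  one_mul _ := rfl
  mul_one _ := rfl
  inv_mul_cancel := AddEquiv.self_trans_symm

instance grpAA' : Group ((ℚ × ℚ) ≃+ (ℚ × ℚ)) := grpAA

/-- Additive automorphisms as multiplicative automorphisms. -/
def jmul : AddAut (ℚ × ℚ) →* MulAut (Multiplicative (ℚ × ℚ)) where
  toFun e := AddEquiv.toMultiplicative e
  map_one' := rfl
  map_mul' e f := rfl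

lemma jmul_apply (e : AddAut (ℚ × ℚ)) (w : Multiplicative (ℚ × ℚ)) :
    jmul e w = ofAdd (e w.toAdd) := rfl

noncomputable def φH : Multiplicative ℤ →* MulAut (Multiplicative (ℚ × ℚ)) :=
  zpowersHom _ (jmul Aq)

abbrev Hgp := SemidirectProduct (Multiplicative (ℚ × ℚ)) (Multiplicative ℤ) φH

def emb : (ℤ × ℤ) →+ (ℚ × ℚ) := (Int.castAddHom ℚ).prodMap (Int.castAddHom ℚ)

def embM : Multiplicative (ℤ × ℤ) →* Multiplicative (ℚ × ℚ) :=
  AddMonoidHom.toMultiplicative emb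

lemma emb_injective : Function.Injective emb := by
  intro p q h
  have h1 : ((p.1 : ℚ), (p.2 : ℚ)) = ((q.1 : ℚ), (q.2 : ℚ)) := h
  rw [Prod.ext_iff] at h1
  ext
  · exact_mod_cast show (p.1:ℚ) = (q.1:ℚ) from h1.1
  · exact_mod_cast show (p.2:ℚ) = (q.2:ℚ) from h1.2

noncomputable def fH : Multiplicative (ℤ × ℤ) →* Hgp := SemidirectProduct.inl.comp embM

lemma Aq_emb (p : ℤ × ℤ) : Aq (emb p) = emb (θ₀ p) := by
  ext <;> simp [Aq, emb, θ₀] <;> push_cast <;> ring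

lemma φH_one_emb (k : Multiplicative (ℤ × ℤ)) : φH (ofAdd 1) (embM k) = embM (Θ₁ k) := by
  rw [φH, zpowersHom_apply, toAdd_ofAdd, zpow_one, jmul_apply]
  exact congrArg ofAdd (Aq_emb k.toAdd)

lemma key_comm : ∀ a : (⊤ : Subgroup (Multiplicative (ℤ × ℤ))),
    (inr (ofAdd (1:ℤ)) : Hgp) * fH ↑a = fH ↑(φ₁ a) * inr (ofAdd 1) := by
  intro a
  show (inr (ofAdd 1) : Hgp) * inl (embM ↑a) = inl (embM (Θ₁ ↑a)) * inr (ofAdd 1)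
  rw [← φH_one_emb, inl_aut, map_inv]
  group

noncomputable def ψ : G₁ →* Hgp := HNNExtension.lift fH (inr (ofAdd 1)) key_comm

lemma t_mul_of' (k : Multiplicative (ℤ × ℤ)) :
    (t : G₁) * of k = of (Θ₁ k) * t := by
  have h := HNNExtension.t_mul_of (G := Multiplicative (ℤ × ℤ)) (A := ⊤) (B := Θ₁.range)
    (φ := φ₁) ⟨k, Subgroup.mem_top k⟩
  simpa [φ₁, MonoidHom.ofInjective_apply] using h

lemma of_mul_t_inv (k : Multiplicative (ℤ × ℤ)) :
    of k * (t : G₁)⁻¹ = t⁻¹ * of (Θ₁ k) := by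
  have h := t_mul_of' k
  calc of k * (t : G₁)⁻¹ = t⁻¹ * (t * of k) * t⁻¹ := by group
    _ = t⁻¹ * (of (Θ₁ k) * t) * t⁻¹ := by rw [h]
    _ = t⁻¹ * of (Θ₁ k) := by group

lemma t_pow_mul_of (n : ℕ) (k : Multiplicative (ℤ × ℤ)) :
    (t : G₁) ^ n * of k = of (Θ₁^[n] k) * t ^ n := by
  induction n with
  | zero => simp
  | succ n ih =>
    rw [pow_succ', mul_assoc, ih, Function.iterate_succ_apply',
      ← mul_assoc, t_mul_of', mul_assoc, ← pow_succ']

lemma of_mul_t_inv_pow (n : ℕ) (k : Multiplicative (ℤ × ℤ)) :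
    of k * ((t : G₁)⁻¹) ^ n = (t⁻¹) ^ n * of (Θ₁^[n] k) := by
  induction n with
  | zero => simp
  | succ n ih =>
    rw [pow_succ, ← mul_assoc, ih, Function.iterate_succ_apply', mul_assoc,
      of_mul_t_inv, ← mul_assoc, ← pow_succ]

theorem nf (g : G₁) : ∃ (a b : ℕ) (k : Multiplicative (ℤ × ℤ)),
    g = ((t : G₁)⁻¹) ^ a * of k * t ^ b := by
  induction g using HNNExtension.induction_on with
  | of g => exact ⟨0, 0, g, by simp⟩
  | t => exact ⟨0, 1, 1, by simp⟩
  | inv x ih =>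
    obtain ⟨a, b, k, rfl⟩ := ih
    refine ⟨b, a, k⁻¹, ?_⟩
    rw [map_inv]
    group
  | mul x y ihx ihy =>
    obtain ⟨a, b, k, rfl⟩ := ihx
    obtain ⟨c, d, k', rfl⟩ := ihy
    rcases le_total c b with hcb | hbc
    · refine ⟨a, b - c + d, k * Θ₁^[b - c] k', ?_⟩
      have key := t_pow_mul_of (b - c) k'
      have hsplit : (t : G₁) ^ b * (t⁻¹) ^ c = t ^ (b - c) := by
        conv_lhs => rw [show b = (b - c) + c from (Nat.sub_add_cancel hcb).symm]
        rw [pow_add, inv_pow, mul_assoc, mul_inv_cancel, mul_one]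
      calc (t : G₁)⁻¹ ^ a * of k * t ^ b * ((t⁻¹) ^ c * of k' * t ^ d)
          = t⁻¹ ^ a * of k * (t ^ b * t⁻¹ ^ c) * of k' * t ^ d := by group
        _ = t⁻¹ ^ a * of k * (t ^ (b - c) * of k') * t ^ d := by rw [hsplit]; group
        _ = t⁻¹ ^ a * of k * (of (Θ₁^[b - c] k') * t ^ (b - c)) * t ^ d := by rw [key]
        _ = t⁻¹ ^ a * (of k * of (Θ₁^[b - c] k')) * (t ^ (b - c) * t ^ d) := by group
        _ = t⁻¹ ^ a * of (k * Θ₁^[b - c] k') * t ^ (b - c + d) := by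
            rw [← map_mul, pow_add]
    · refine ⟨a + (c - b), d, Θ₁^[c - b] k * k', ?_⟩
      have key := of_mul_t_inv_pow (c - b) k
      have hsplit : (t : G₁) ^ b * (t⁻¹) ^ c = (t⁻¹) ^ (c - b) := by
        conv_lhs => rw [show c = b + (c - b) from (Nat.add_sub_cancel' hbc).symm]
        rw [pow_add]; group
      calc (t : G₁)⁻¹ ^ a * of k * t ^ b * ((t⁻¹) ^ c * of k' * t ^ d)
          = t⁻¹ ^ a * (of k * (t ^ b * t⁻¹ ^ c)) * of k' * t ^ d := by group
        _ = t⁻¹ ^ a * (of k * t⁻¹ ^ (c - b)) * of k' * t ^ d := by rw [hsplit]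
        _ = t⁻¹ ^ a * (t⁻¹ ^ (c - b) * of (Θ₁^[c - b] k)) * of k' * t ^ d := by rw [key]
        _ = (t⁻¹ ^ a * t⁻¹ ^ (c - b)) * (of (Θ₁^[c - b] k) * of k') * t ^ d := by group
        _ = t⁻¹ ^ (a + (c - b)) * of (Θ₁^[c - b] k * k') * t ^ d := by
            rw [← map_mul, pow_add]

lemma ψ_t : ψ (t : G₁) = inr (ofAdd 1) := HNNExtension.lift_t _ _ _

lemma ψ_of (k : Multiplicative (ℤ × ℤ)) : ψ (of k) = inl (embM k) :=
  HNNExtension.lift_of _ _ _ _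

lemma embM_eq_one {k : Multiplicative (ℤ × ℤ)} (h : embM k = 1) : k = 1 := by
  have : emb k.toAdd = 0 := h
  have h0 : emb k.toAdd = emb 0 := by rw [this, map_zero]
  have := emb_injective h0
  simpa using this

theorem psi_eq_one (g : G₁) (hg : ψ g = 1) : g = 1 := by
  obtain ⟨a, b, k, rfl⟩ := nf g
  have hr := congrArg rightHom hg
  simp only [map_mul, map_pow, map_inv, ψ_t, ψ_of, rightHom_inl, rightHom_inr,
    map_one, one_pow, inv_pow, one_mul, mul_one] at hr
  -- hr in Multiplicative ℤ
  have hba : b = a := by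
    have : (-(a:ℤ)) + b = 0 := by
      have := congrArg Multiplicative.toAdd hr
      simpa using this
    omega
  subst hba
  have hofk : (of k : G₁) = t ^ b * ((t⁻¹) ^ b * of k * t ^ b) * (t⁻¹) ^ b := by group
  have h2 : ψ (of k) = 1 := by
    rw [hofk, map_mul, map_mul, hg, mul_one, ← map_mul]
    rw [show (t:G₁) ^ b * (t⁻¹) ^ b = 1 by group, map_one]
  rw [ψ_of] at h2
  have hk : k = 1 := embM_eq_one (inl_injective (by simpa using h2))
  rw [hk, map_one, mul_one]
  group

lemma not_sq_17 (r : ℚ) : r ^ 2 ≠ 17 := by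
  intro hr
  have hs : IsSquare ((17 : ℕ) : ℚ) := ⟨r, by push_cast; linear_combination -hr⟩
  rw [Rat.isSquare_natCast_iff] at hs
  exact ((by norm_num : Nat.Prime 17).prime).not_isSquare hs

lemma quad_zero (w : ℚ × ℚ) (h : w.1 ^ 2 + 5 * w.1 * w.2 + 2 * w.2 ^ 2 = 0) :
    w = 0 := by
  by_cases h2 : w.2 = 0
  · have h1 : w.1 = 0 := by nlinarith [sq_nonneg w.1]
    ext <;> simp [h1, h2]
  · exfalso
    have key : (2 * w.1 + 5 * w.2) ^ 2 = 17 * w.2 ^ 2 := by linear_combination 4 * h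
    apply not_sq_17 ((2 * w.1 + 5 * w.2) / w.2)
    rw [div_pow, key]
    field_simp

lemma Aq_apply (p : ℚ × ℚ) : Aq p = (5 * p.1 + 2 * p.2, -p.1) := rfl

def eII : ℚ × ℚ := (0, 1)

lemma pow_succ_apply (n : ℕ) (v : ℚ × ℚ) :
    (Aq ^ (n + 1) : AddAut (ℚ × ℚ)) v = Aq ((Aq ^ n : AddAut (ℚ × ℚ)) v) := by
  rw [pow_succ']; rfl

lemma Fpos : ∀ n : ℕ, 2 ≤ ((Aq ^ (n + 1) : AddAut (ℚ × ℚ)) eII).1 ∧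
    2 * ((Aq ^ (n + 1) : AddAut (ℚ × ℚ)) eII).1 ≤ ((Aq ^ (n + 2) : AddAut (ℚ × ℚ)) eII).1 := by
  intro n
  induction n with
  | zero =>
    have h0 : (Aq ^ (0 : ℕ) : AddAut (ℚ × ℚ)) eII = eII := by rw [pow_zero]; rfl
    have h1 : (Aq ^ (1 : ℕ) : AddAut (ℚ × ℚ)) eII = (2, 0) := by
      rw [pow_succ_apply, h0, Aq_apply]; norm_num [eII]
    have h2 : (Aq ^ (2 : ℕ) : AddAut (ℚ × ℚ)) eII = (10, -2) := by
      rw [pow_succ_apply, h1, Aq_apply]; norm_num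
    rw [h1, h2]
    norm_num
  | succ n ih =>
    have h3 := Aq_apply ((Aq ^ (n + 1) : AddAut (ℚ × ℚ)) eII)
    have hrec : ((Aq ^ (n + 3) : AddAut (ℚ × ℚ)) eII).1
        = 5 * ((Aq ^ (n + 2) : AddAut (ℚ × ℚ)) eII).1
          - 2 * ((Aq ^ (n + 1) : AddAut (ℚ × ℚ)) eII).1 := by
      rw [show n + 3 = (n + 2) + 1 from rfl, pow_succ_apply (n + 2), pow_succ_apply (n + 1)]
      rw [Aq_apply, Aq_apply]
      dsimp
      ring
    obtain ⟨ha, hb⟩ := ih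
    constructor
    · linarith
    · rw [show n + 1 + 2 = n + 3 from rfl, hrec]
      linarith

lemma m_facts {m : ℤ} (hm : 2 ≤ |m|) : m ≠ 0 ∧ m ≠ 1 := by
  rcases le_abs.mp hm with h | h <;> constructor <;> omega

lemma zpow_mul_apply (c d : ℤ) (v : ℚ × ℚ) :
    (Aq ^ (c + d) : AddAut (ℚ × ℚ)) v = (Aq ^ c : AddAut (ℚ × ℚ)) ((Aq ^ d : AddAut (ℚ × ℚ)) v) := by
  rw [zpow_add]; rfl

lemma eigen (c m : ℤ) (hm : 2 ≤ |m|) (w : ℚ × ℚ)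
    (hw : (Aq ^ c : AddAut (ℚ × ℚ)) w = (m : ℚ) • w) : w = 0 := by
  obtain ⟨hm0, hm1⟩ := m_facts hm
  have hmq : (m : ℚ) ≠ 0 := Int.cast_ne_zero.mpr hm0
  rcases eq_or_ne c 0 with rfl | hc
  · rw [zpow_zero] at hw
    have h1 : ((m : ℚ) - 1) • w = 0 := by
      rw [sub_smul, one_smul, ← hw]
      show (1 : AddAut (ℚ × ℚ)) w - w = 0
      rw [show (1 : AddAut (ℚ × ℚ)) w = w from rfl, sub_self]
    rcases smul_eq_zero.mp h1 with h | h
    · exfalso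
      apply hm1
      have : (m : ℚ) = 1 := by linarith [sub_eq_zero.mp h]
      exact_mod_cast this
    · exact h
  by_cases hQ : w.1 ^ 2 + 5 * w.1 * w.2 + 2 * w.2 ^ 2 = 0
  · exact quad_zero w hQ
  exfalso
  set u := Aq w with hu_def
  have hcomm : (Aq ^ c : AddAut (ℚ × ℚ)) u = Aq ((Aq ^ c : AddAut (ℚ × ℚ)) w) := by
    have h1 : (Aq ^ c : AddAut (ℚ × ℚ)) u = (Aq ^ (c + 1) : AddAut (ℚ × ℚ)) w := by
      rw [zpow_mul_apply c 1, zpow_one]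
    rw [h1, add_comm, zpow_mul_apply 1 c, zpow_one]
  have hu : (Aq ^ c : AddAut (ℚ × ℚ)) u = (m : ℚ) • u := by
    rw [hcomm, hw, hu_def]
    exact map_rat_smul Aq _ _
  set Q := w.1 ^ 2 + 5 * w.1 * w.2 + 2 * w.2 ^ 2 with hQdef
  have hrep : eII = ((5 * w.1 + 2 * w.2) / Q) • w + (-w.1 / Q) • u := by
    have hu2 : u = (5 * w.1 + 2 * w.2, -w.1) := rfl
    rw [hu2]
    ext
    · simp only [eII, Prod.fst_add, Prod.smul_fst, smul_eq_mul]
      field_simp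
      ring
    · simp only [eII, Prod.snd_add, Prod.smul_snd, smul_eq_mul]
      field_simp
      ring
  have he2 : (Aq ^ c : AddAut (ℚ × ℚ)) eII = (m : ℚ) • eII := by
    rw [hrep, map_add, map_rat_smul, map_rat_smul, hw, hu,
      smul_comm _ ((m : ℚ)), smul_comm _ ((m : ℚ)), ← smul_add]
  have h1 : ((Aq ^ c : AddAut (ℚ × ℚ)) eII).1 = 0 := by
    rw [he2]
    simp [eII]
  have hFpos : ∀ n : ℕ, ((Aq ^ ((n : ℤ) + 1) : AddAut (ℚ × ℚ)) eII).1 ≠ 0 := by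
    intro n
    have := (Fpos n).1
    have hcast : (Aq ^ ((n : ℤ) + 1) : AddAut (ℚ × ℚ)) = (Aq ^ (n + 1 : ℕ) : AddAut (ℚ × ℚ)) := by
      rw [← zpow_natCast]
      norm_num
    rw [hcast]
    linarith
  rcases lt_or_gt_of_ne hc with hneg | hpos
  · -- c < 0
    have h2 : ((Aq ^ (-c) : AddAut (ℚ × ℚ)) eII).1 = 0 := by
      have hback : (Aq ^ (-c) : AddAut (ℚ × ℚ)) ((Aq ^ c : AddAut (ℚ × ℚ)) eII) = eII := by
        rw [← zpow_mul_apply, neg_add_cancel, zpow_zero]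
        rfl
      rw [he2, map_rat_smul] at hback
      have h5 : (m : ℚ) * ((Aq ^ (-c) : AddAut (ℚ × ℚ)) eII).1 = 0 := by
        have h6 := congrArg Prod.fst hback
        simp only [Prod.smul_fst, smul_eq_mul] at h6
        rw [h6]
        simp [eII]
      exact (mul_eq_zero.mp h5).resolve_left hmq
    obtain ⟨n, hn⟩ : ∃ n : ℕ, -c = (n : ℤ) + 1 := ⟨(-c - 1).toNat, by omega⟩
    rw [hn] at h2
    exact hFpos n h2
  · obtain ⟨n, hn⟩ : ∃ n : ℕ, c = (n : ℤ) + 1 := ⟨(c - 1).toNat, by omega⟩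
    rw [hn] at h1
    exact hFpos n h1


/-- In `G₁`, any Baumslag–Solitar relation `y * x * y⁻¹ = x ^ m` with `|m| ≥ 2`
forces `x` to be of finite order, and hence (as `G₁` is torsion-free) `x = 1`. -/
theorem G₁_no_BS_relation (x y : G₁) (m : ℤ) (hm : 2 ≤ |m|)
    (h : y * x * y⁻¹ = x ^ m) : IsOfFinOrder x ∧ x = 1 := by
  obtain ⟨hm0, hm1⟩ := m_facts hm
  suffices hx1 : x = 1 by subst hx1; exact ⟨IsOfFinOrder.one, rfl⟩
  apply psi_eq_one
  have hH : ψ y * ψ x * (ψ y)⁻¹ = (ψ x) ^ m := by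
    have := congrArg ψ h
    simpa [map_mul, map_inv, map_zpow] using this
  set X := ψ x with hX
  set Y := ψ y with hY
  -- the right (ℤ) component of X is trivial
  have hr : rightHom X = 1 := by
    have h1 := congrArg rightHom hH
    simp only [map_mul, map_inv, map_zpow] at h1
    have h3 := congrArg Multiplicative.toAdd h1
    simp only [toAdd_mul, toAdd_inv, toAdd_zpow, smul_eq_mul] at h3
    have h4 : (rightHom X).toAdd = m * (rightHom X).toAdd := by linarith
    have h5 : (m - 1) * (rightHom X).toAdd = 0 := by linarith
    have h6 : (rightHom X).toAdd = 0 :=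
      (mul_eq_zero.mp h5).resolve_left (by omega)
    have h7 := congrArg Multiplicative.ofAdd h6
    simpa using h7
  have hXr : X.right = 1 := hr
  have hXl : X = inl X.left := by
    conv_lhs => rw [← inl_left_mul_inr_right X]
    rw [hXr, map_one, mul_one]
  have hY' : Y = inl Y.left * inr Y.right := (inl_left_mul_inr_right Y).symm
  have c1 : inr Y.right * inl X.left * (inr Y.right)⁻¹ = (inl (φH Y.right X.left) : Hgp) := by
    rw [inl_aut, map_inv]
  have c2 : Y * X * Y⁻¹ = inl Y.left * inl (φH Y.right X.left) * (inl Y.left)⁻¹ := by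
    conv_lhs => rw [hXl, hY']
    rw [← c1]
    group
  have c3 : inl Y.left * (inl (φH Y.right X.left) : Hgp) * (inl Y.left)⁻¹
      = inl (φH Y.right X.left) := by
    rw [← map_inv, ← map_mul, ← map_mul]
    congr 1
    rw [mul_comm Y.left, mul_assoc, mul_inv_cancel, mul_one]
  have c4 : (inl (φH Y.right X.left) : Hgp) = inl (X.left ^ m) := by
    rw [← c3, ← c2, hH]
    conv_lhs => rw [hXl]
    rw [← map_zpow]
  have hkey : φH Y.right X.left = X.left ^ m := inl_injective c4
  set cz := (Y.right).toAdd with hcz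
  have hφ : φH Y.right = jmul (Aq ^ cz) := by
    show (jmul Aq) ^ cz = jmul (Aq ^ cz)
    exact (map_zpow jmul Aq cz).symm
  have hadd : (Aq ^ cz : AddAut (ℚ × ℚ)) (X.left).toAdd = (m : ℚ) • (X.left).toAdd := by
    have h7 : ofAdd ((Aq ^ cz : AddAut (ℚ × ℚ)) (X.left).toAdd) = X.left ^ m := by
      rw [← jmul_apply, ← hφ, hkey]
    have h8 := congrArg Multiplicative.toAdd h7
    rw [toAdd_ofAdd, toAdd_zpow] at h8
    rw [h8, Int.cast_smul_eq_zsmul]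
  have hw0 : (X.left).toAdd = 0 := eigen cz m hm _ hadd
  have hXL1 : X.left = 1 := by
    have := congrArg Multiplicative.ofAdd hw0
    simpa using this
  show X = 1
  rw [hXl, hXL1, map_one]
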